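/- arXiv:2604.20394 — 2 statements merged into one kernel-verified Lean document; each statement's English description precedes it below -/
import Mathlib

section
/- Fix τ > 0 and M ≥ 0. Let P ⊆ {1,...,N} be a set of feature values such that every interval (a, b] ⊆ {1,...,N} containing the feature values of more than τ·m data points contains some element of P. Define the candidate set S = {0, N} ∪ {x : x ∈ P} ∪ {x − 1 : x ∈ P, x > 1}. Then there exists j ∈ S with L(j) ≤ OPT + τ·M², where OPT = min_{0 ≤ j ≤ N} L(j). -/
open Finset

/-- Sum of squared errors of the data points whose feature value lies in the range `R`. -/
noncomputable def SSE (m : ℕ) (x : Fin m → ℕ) (y : Fin m → ℝ) (R : Finset ℕ) : ℝ :=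
  let idx := Finset.univ.filter fun i => x i ∈ R
  if idx.Nonempty then
    (∑ i ∈ idx, (y i) ^ 2) - (∑ i ∈ idx, y i) ^ 2 / (idx.card : ℝ)
  else 0

/-- Mean squared loss of split `j ∈ {0,…,N}`. -/
noncomputable def L (m N : ℕ) (x : Fin m → ℕ) (y : Fin m → ℝ) (j : ℕ) : ℝ :=
  (1 / m : ℝ) * (SSE m x y (Finset.Icc 1 j) + SSE m x y (Finset.Icc (j + 1) N))

noncomputable def SSE' {m : ℕ} (y : Fin m → ℝ) (s : Finset (Fin m)) : ℝ :=
  if s.Nonempty then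
    (∑ i ∈ s, (y i) ^ 2) - (∑ i ∈ s, y i) ^ 2 / (s.card : ℝ)
  else 0

lemma sum_sub_sq {m : ℕ} (y : Fin m → ℝ) (s : Finset (Fin m)) (c : ℝ) :
    ∑ i ∈ s, (y i - c)^2
      = (∑ i ∈ s, (y i)^2) - 2*c*(∑ i ∈ s, y i) + s.card * c^2 := by
  simp only [sub_sq]
  rw [Finset.sum_add_distrib, Finset.sum_sub_distrib, Finset.sum_const, nsmul_eq_mul,
    show (∑ i ∈ s, 2 * y i * c) = 2*c*(∑ i ∈ s, y i) from by
      rw [Finset.mul_sum]; exact Finset.sum_congr rfl fun i _ => by ring]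

lemma SSE'_le {m : ℕ} (y : Fin m → ℝ) (s : Finset (Fin m)) (c : ℝ) :
    SSE' y s ≤ ∑ i ∈ s, (y i - c)^2 := by
  unfold SSE'
  split_ifs with h
  · have hn : (0:ℝ) < s.card := by exact_mod_cast Finset.card_pos.mpr h
    rw [sum_sub_sq]
    have key : 2*c*(∑ i ∈ s, y i) - s.card * c^2 ≤ (∑ i ∈ s, y i)^2 / s.card := by
      rw [le_div_iff₀ hn]
      nlinarith [sq_nonneg ((∑ i ∈ s, y i) - s.card * c)]
    linarith
  · positivity

lemma SSE'_eq {m : ℕ} (y : Fin m → ℝ) (s : Finset (Fin m)) (h : s.Nonempty) :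
    SSE' y s = ∑ i ∈ s, (y i - (∑ i ∈ s, y i)/s.card)^2 := by
  have hn : (0:ℝ) < s.card := by exact_mod_cast Finset.card_pos.mpr h
  rw [sum_sub_sq]
  unfold SSE'
  rw [if_pos h]
  field_simp
  ring

lemma SSE'_mono {m : ℕ} (y : Fin m → ℝ) {s t : Finset (Fin m)} (hst : s ⊆ t) :
    SSE' y s ≤ SSE' y t := by
  rcases t.eq_empty_or_nonempty with ht | ht
  · subst ht
    rw [Finset.subset_empty.mp hst]
  · calc SSE' y s ≤ ∑ i ∈ s, (y i - (∑ i ∈ t, y i)/t.card)^2 := SSE'_le y s _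
    _ ≤ ∑ i ∈ t, (y i - (∑ i ∈ t, y i)/t.card)^2 :=
        Finset.sum_le_sum_of_subset_of_nonneg hst (fun i _ _ => sq_nonneg _)
    _ = SSE' y t := (SSE'_eq y t ht).symm

lemma SSE'_union {m : ℕ} {M : ℝ} (hM : 0 ≤ M) (y : Fin m → ℝ)
    (hy : ∀ i, y i ∈ Set.Icc (0:ℝ) M)
    (s e : Finset (Fin m)) (hd : Disjoint s e) :
    SSE' y (s ∪ e) ≤ SSE' y s + e.card * M^2 := by
  obtain ⟨c, hc0, hcM, hcs⟩ : ∃ c : ℝ, 0 ≤ c ∧ c ≤ M ∧ ∑ i ∈ s, (y i - c)^2 = SSE' y s := by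
    rcases s.eq_empty_or_nonempty with hs | hs
    · exact ⟨0, le_refl _, hM, by simp [hs, SSE', Finset.not_nonempty_empty]⟩
    · have hn : (0:ℝ) < s.card := by exact_mod_cast Finset.card_pos.mpr hs
      refine ⟨(∑ i ∈ s, y i)/s.card, ?_, ?_, (SSE'_eq y s hs).symm⟩
      · apply div_nonneg _ hn.le
        exact Finset.sum_nonneg fun i _ => (hy i).1
      · rw [div_le_iff₀ hn]
        calc ∑ i ∈ s, y i ≤ ∑ i ∈ s, M := Finset.sum_le_sum fun i _ => (hy i).2
        _ = s.card * M := by rw [Finset.sum_const, nsmul_eq_mul]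
        _ = M * s.card := by ring
  calc SSE' y (s ∪ e) ≤ ∑ i ∈ s ∪ e, (y i - c)^2 := SSE'_le y _ c
  _ = (∑ i ∈ s, (y i - c)^2) + ∑ i ∈ e, (y i - c)^2 := Finset.sum_union hd
  _ ≤ SSE' y s + ∑ i ∈ e, M^2 := by
      refine add_le_add (le_of_eq hcs) (Finset.sum_le_sum fun i _ => ?_)
      have h1 := (hy i).1
      have h2 := (hy i).2
      nlinarith
  _ = SSE' y s + e.card * M^2 := by rw [Finset.sum_const, nsmul_eq_mul]


lemma SSE_eq_SSE' (m : ℕ) (x : Fin m → ℕ) (y : Fin m → ℝ) (R : Finset ℕ) :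
    SSE m x y R = SSE' y (Finset.univ.filter fun i => x i ∈ R) := rfl

/-- Candidate quality: if `P ⊆ {1,…,N}` hits every interval `(a,b]` containing more than
`τ·m` data points, then the candidate set `S = {0, N} ∪ P ∪ {p − 1 : p ∈ P, p > 1}` contains
a split `j` with `L(j) ≤ OPT + τ·M²`. -/
theorem candidate_quality (m N : ℕ) (hm : 1 ≤ m) (τ M : ℝ) (hτ : 0 < τ) (hM : 0 ≤ M)
    (x : Fin m → ℕ) (y : Fin m → ℝ)
    (hx : ∀ i, x i ∈ Finset.Icc 1 N) (hy : ∀ i, y i ∈ Set.Icc (0 : ℝ) M)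
    (P : Finset ℕ) (hP : P ⊆ Finset.Icc 1 N)
    (hcover : ∀ a b : ℕ, a < b → b ≤ N →
      τ * m < ((Finset.univ.filter fun i => a < x i ∧ x i ≤ b).card : ℝ) →
      ∃ p ∈ P, a < p ∧ p ≤ b) :
    ∃ j ∈ ({0, N} : Finset ℕ) ∪ P ∪ (P.filter fun p => 1 < p).image (fun p => p - 1),
      L m N x y j ≤
        (Finset.Icc 0 N).inf' (Finset.nonempty_Icc.mpr (Nat.zero_le N)) (L m N x y)
        + τ * M ^ 2 := by
  have hm0 : (0:ℝ) < m := by exact_mod_cast hm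
  have hτM : 0 ≤ τ * M^2 := by positivity
  set S := ({0, N} : Finset ℕ) ∪ P ∪ (P.filter fun p => 1 < p).image (fun p => p - 1) with hS
  obtain ⟨j, hjmem, hjopt⟩ := Finset.exists_mem_eq_inf'
    (Finset.nonempty_Icc.mpr (Nat.zero_le N)) (L m N x y)
  rw [hjopt]
  have hjN : j ≤ N := (Finset.mem_Icc.mp hjmem).2
  have h0S : 0 ∈ S := by simp [hS]
  set T := S.filter (· ≤ j) with hT
  have hTne : T.Nonempty := ⟨0, Finset.mem_filter.mpr ⟨h0S, Nat.zero_le j⟩⟩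
  set k := T.max' hTne with hk
  have hkT := T.max'_mem hTne
  have hkS : k ∈ S := (Finset.mem_filter.mp hkT).1
  have hkj : k ≤ j := (Finset.mem_filter.mp hkT).2
  refine ⟨k, hkS, ?_⟩
  rcases eq_or_lt_of_le hkj with heq | hkj2
  · rw [heq]; linarith
  · -- k < j
    set E := Finset.univ.filter fun i => k < x i ∧ x i ≤ j with hE
    have hEcard : (E.card : ℝ) ≤ τ * m := by
      by_contra h
      push_neg at h
      obtain ⟨p, hpP, hpk, hpj⟩ := hcover k j hkj2 hjN h
      have hpT : p ∈ T := Finset.mem_filter.mpr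
        ⟨Finset.mem_union_left _ (Finset.mem_union_right _ hpP), hpj⟩
      have := T.le_max' p hpT
      omega
    have h1 : SSE m x y (Finset.Icc 1 k) ≤ SSE m x y (Finset.Icc 1 j) := by
      rw [SSE_eq_SSE', SSE_eq_SSE']
      apply SSE'_mono
      intro i hi
      simp only [Finset.mem_filter, Finset.mem_Icc] at hi ⊢
      exact ⟨hi.1, hi.2.1, hi.2.2.trans hkj⟩
    have hsplit : (Finset.univ.filter fun i => x i ∈ Finset.Icc (k+1) N)
        = (Finset.univ.filter fun i => x i ∈ Finset.Icc (j+1) N) ∪ E := by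
      ext i
      have := Finset.mem_Icc.mp (hx i)
      simp only [hE, Finset.mem_filter, Finset.mem_union, Finset.mem_Icc, Finset.mem_univ,
        true_and]
      omega
    have hdisj : Disjoint (Finset.univ.filter fun i => x i ∈ Finset.Icc (j+1) N) E := by
      rw [Finset.disjoint_left]
      intro i hi hi'
      simp only [hE, Finset.mem_filter, Finset.mem_Icc] at hi hi'
      omega
    have h2 : SSE m x y (Finset.Icc (k+1) N)
        ≤ SSE m x y (Finset.Icc (j+1) N) + E.card * M^2 := by
      rw [SSE_eq_SSE', SSE_eq_SSE', hsplit]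
      exact SSE'_union hM y hy _ _ hdisj
    have hlast : (1/m : ℝ) * (E.card * M^2) ≤ τ * M^2 := by
      rw [div_mul_eq_mul_div, one_mul, div_le_iff₀ hm0]
      calc (E.card : ℝ) * M^2 ≤ (τ * m) * M^2 := by nlinarith [sq_nonneg M]
      _ = τ * M^2 * m := by ring
    calc L m N x y k
        = (1/m : ℝ) * (SSE m x y (Finset.Icc 1 k) + SSE m x y (Finset.Icc (k+1) N)) := rfl
      _ ≤ (1/m : ℝ) * ((SSE m x y (Finset.Icc 1 j) + SSE m x y (Finset.Icc (j+1) N))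
            + E.card * M^2) := by
          apply mul_le_mul_of_nonneg_left _ (by positivity)
          linarith
      _ = L m N x y j + (1/m : ℝ) * (E.card * M^2) := by rw [L]; ring
      _ ≤ L m N x y j + τ * M^2 := by linarith
end

section
/- In the classification lower-bound construction, |L_mis(2i−1) − L_mis(2i)| = B/m = 1/(9n); moreover, if z_i = 1 then L_mis(2i) = L_mis(2i−1) + B/m (so the split 2i−1 is strictly better), and if z_i = 0 then L_mis(2i−1) = L_mis(2i) + B/m (so the split 2i is strictly better). In particular, which of the two adjacent splits achieves the smaller misclassification loss determines the bit z_i. -/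
open Finset Classical

/-- Number of data points with feature value in the range `R` and label `v`. -/
noncomputable def fcount (data : Multiset (ℕ × ℝ)) (v : ℝ) (R : Finset ℕ) : ℕ :=
  Multiset.card (data.filter fun p => p.1 ∈ R ∧ p.2 = v)

/-- Misclassification loss of split `j ∈ {0,…,N}`. -/
noncomputable def Lmis (N : ℕ) (data : Multiset (ℕ × ℝ)) (j : ℕ) : ℝ :=
  (1 / (Multiset.card data : ℝ)) *
    (((min (fcount data (-1) (Finset.Icc 1 j)) (fcount data 1 (Finset.Icc 1 j)) : ℕ) : ℝ) +
     ((min (fcount data (-1) (Finset.Icc (j + 1) N))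
         (fcount data 1 (Finset.Icc (j + 1) N)) : ℕ) : ℝ))

/-- The classification lower-bound dataset: for each `k ∈ {1,…,n}`, `B = n` copies of
`(2k, s_k)` with `s_k = +1` if `z_k = 1` and `s_k = −1` if `z_k = 0`; `T = 4n²` copies of
`(2i−1, −1)`; and `T` copies of `(2i+1, +1)`. -/
noncomputable def classData (n i : ℕ) (z : ℕ → ℕ) : Multiset (ℕ × ℝ) :=
  (∑ k ∈ Finset.Icc 1 n, Multiset.replicate n (2 * k, if z k = 1 then (1 : ℝ) else -1))
  + Multiset.replicate (4 * n ^ 2) (2 * i - 1, (-1 : ℝ))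
  + Multiset.replicate (4 * n ^ 2) (2 * i + 1, (1 : ℝ))

lemma filter_replicate' {α : Type*} (p : α → Prop) [DecidablePred p] (n : ℕ) (a : α) :
    Multiset.filter p (Multiset.replicate n a) = if p a then Multiset.replicate n a else 0 := by
  induction n with
  | zero => simp
  | succ n ih =>
      rw [Multiset.replicate_succ, Multiset.filter_cons, ih]
      split_ifs <;> simp [Multiset.replicate_succ]

lemma card_filter_sum' {α β : Type*} (p : α → Prop) [DecidablePred p] (s : Finset β)
    (f : β → Multiset α) :
    Multiset.card (Multiset.filter p (∑ k ∈ s, f k)) =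
      ∑ k ∈ s, Multiset.card (Multiset.filter p (f k)) := by
  induction s using Finset.cons_induction with
  | empty => simp
  | cons a s ha ih =>
      rw [Finset.sum_cons, Multiset.filter_add, Multiset.card_add, ih, Finset.sum_cons]

lemma card_sum'' {α β : Type*} (s : Finset β) (f : β → Multiset α) :
    Multiset.card (∑ k ∈ s, f k) = ∑ k ∈ s, Multiset.card (f k) := by
  induction s using Finset.cons_induction with
  | empty => simp
  | cons a s ha ih => rw [Finset.sum_cons, Multiset.card_add, ih, Finset.sum_cons]

lemma fcount_classData (n i : ℕ) (z : ℕ → ℕ) (v : ℝ) (R : Finset ℕ) :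
    fcount (classData n i z) v R =
      (∑ k ∈ Finset.Icc 1 n,
        if 2 * k ∈ R ∧ (if z k = 1 then (1 : ℝ) else -1) = v then n else 0)
      + (if 2 * i - 1 ∈ R ∧ (-1 : ℝ) = v then 4 * n ^ 2 else 0)
      + (if 2 * i + 1 ∈ R ∧ (1 : ℝ) = v then 4 * n ^ 2 else 0) := by
  classical
  unfold fcount classData
  rw [Multiset.filter_add, Multiset.filter_add, Multiset.card_add, Multiset.card_add,
    card_filter_sum']
  congr 1
  · congr 1
    · refine Finset.sum_congr rfl fun k hk => ?_
      rw [filter_replicate']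
      split_ifs <;> simp_all
    · rw [filter_replicate']; split_ifs <;> simp_all
  · rw [filter_replicate']; split_ifs <;> simp_all

lemma fcount_classData_neg (n i : ℕ) (z : ℕ → ℕ) (hz : ∀ k, z k = 0 ∨ z k = 1) (R : Finset ℕ) :
    fcount (classData n i z) (-1) R =
      (∑ k ∈ Finset.Icc 1 n, if 2 * k ∈ R ∧ z k = 0 then n else 0)
      + (if 2 * i - 1 ∈ R then 4 * n ^ 2 else 0) := by
  classical
  rw [fcount_classData]
  have h3 : (if 2 * i + 1 ∈ R ∧ (1 : ℝ) = -1 then 4 * n ^ 2 else 0) = 0 := by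
    rw [if_neg]; rintro ⟨-, h⟩; norm_num at h
  rw [h3, add_zero]
  congr 1
  · refine Finset.sum_congr rfl fun k hk => ?_
    refine if_congr ?_ rfl rfl
    rcases hz k with h0 | h1
    · simp [h0]
    · constructor
      · rintro ⟨-, h⟩; rw [if_pos h1] at h; norm_num at h
      · rintro ⟨-, h⟩; omega
  · refine if_congr ?_ rfl rfl
    simp

lemma fcount_classData_pos (n i : ℕ) (z : ℕ → ℕ) (hz : ∀ k, z k = 0 ∨ z k = 1) (R : Finset ℕ) :
    fcount (classData n i z) 1 R =
      (∑ k ∈ Finset.Icc 1 n, if 2 * k ∈ R ∧ z k = 1 then n else 0)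
      + (if 2 * i + 1 ∈ R then 4 * n ^ 2 else 0) := by
  classical
  rw [fcount_classData]
  have h2 : (if 2 * i - 1 ∈ R ∧ (-1 : ℝ) = 1 then 4 * n ^ 2 else 0) = 0 := by
    rw [if_neg]; rintro ⟨-, h⟩; norm_num at h
  rw [h2, add_zero]
  congr 1
  · refine Finset.sum_congr rfl fun k hk => ?_
    refine if_congr ?_ rfl rfl
    rcases hz k with h0 | h1
    · constructor
      · rintro ⟨-, h⟩; rw [if_neg (by omega)] at h; norm_num at h
      · rintro ⟨-, h⟩; omega
    · simp [h1]
  · refine if_congr ?_ rfl rfl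
    simp

/-- In the classification lower-bound construction, the losses of the adjacent splits `2i−1`
and `2i` differ by exactly `B/m = 1/(9n)`; if `z_i = 1` then `L_mis(2i) = L_mis(2i−1) + B/m`
(the split `2i−1` is strictly better), and if `z_i = 0` then
`L_mis(2i−1) = L_mis(2i) + B/m` (the split `2i` is strictly better); hence the better of the
two adjacent splits reveals the bit `z_i`. -/
theorem cls_gap_reveals_bit (n : ℕ) (hn : 1 ≤ n) (i : ℕ) (hi : i ∈ Finset.Icc 1 n)
    (z : ℕ → ℕ) (hz : ∀ k, z k = 0 ∨ z k = 1) :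
    |Lmis (2 * n + 1) (classData n i z) (2 * i - 1)
        - Lmis (2 * n + 1) (classData n i z) (2 * i)|
      = (n : ℝ) / (Multiset.card (classData n i z) : ℝ) ∧
    (n : ℝ) / (Multiset.card (classData n i z) : ℝ) = 1 / (9 * (n : ℝ)) ∧
    (z i = 1 →
      Lmis (2 * n + 1) (classData n i z) (2 * i)
        = Lmis (2 * n + 1) (classData n i z) (2 * i - 1)
          + (n : ℝ) / (Multiset.card (classData n i z) : ℝ)) ∧
    (z i = 0 →
      Lmis (2 * n + 1) (classData n i z) (2 * i - 1)
        = Lmis (2 * n + 1) (classData n i z) (2 * i)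
          + (n : ℝ) / (Multiset.card (classData n i z) : ℝ)) := by
  classical
  obtain ⟨hi1, hin⟩ := Finset.mem_Icc.mp hi
  have hcard : Multiset.card (classData n i z) = 9 * n ^ 2 := by
    unfold classData
    rw [Multiset.card_add, Multiset.card_add, card_sum'']
    simp only [Multiset.card_replicate, Finset.sum_const, Nat.card_Icc, smul_eq_mul]
    have h : n + 1 - 1 = n := by omega
    rw [h]
    ring
  have hcard' : (Multiset.card (classData n i z) : ℝ) = 9 * (n : ℝ) ^ 2 := by
    rw [hcard]; push_cast; ring
  have hnR : (0 : ℝ) < (n : ℝ) := by exact_mod_cast hn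
  -- the four "middle" sums
  have hble : ∀ f : ℕ → ℕ, (∀ k, f k ≤ n) → (∑ k ∈ Finset.Icc 1 n, f k) ≤ 4 * n ^ 2 := by
    intro f hf
    calc ∑ k ∈ Finset.Icc 1 n, f k ≤ ∑ _k ∈ Finset.Icc 1 n, n :=
          Finset.sum_le_sum fun k _ => hf k
      _ = n * n := by simp [Finset.sum_const, Nat.card_Icc, mul_comm]
      _ ≤ 4 * n ^ 2 := by nlinarith
  -- fcount evaluations
  have e1 : fcount (classData n i z) (-1) (Finset.Icc 1 (2 * i - 1)) =
      (∑ k ∈ Finset.Icc 1 n, if k < i ∧ z k = 0 then n else 0) + 4 * n ^ 2 := by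
    rw [fcount_classData_neg n i z hz,
      if_pos (Finset.mem_Icc.mpr ⟨by omega, le_rfl⟩)]
    congr 1
    refine Finset.sum_congr rfl fun k hk => ?_
    obtain ⟨hk1, hk2⟩ := Finset.mem_Icc.mp hk
    refine if_congr ?_ rfl rfl
    simp only [Finset.mem_Icc]
    omega
  have e2 : fcount (classData n i z) 1 (Finset.Icc 1 (2 * i - 1)) =
      (∑ k ∈ Finset.Icc 1 n, if k < i ∧ z k = 1 then n else 0) := by
    rw [fcount_classData_pos n i z hz,
      if_neg (by simp only [Finset.mem_Icc]; omega), add_zero]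
    refine Finset.sum_congr rfl fun k hk => ?_
    obtain ⟨hk1, hk2⟩ := Finset.mem_Icc.mp hk
    refine if_congr ?_ rfl rfl
    simp only [Finset.mem_Icc]
    omega
  have e3 : fcount (classData n i z) (-1) (Finset.Icc (2 * i) (2 * n + 1)) =
      (∑ k ∈ Finset.Icc 1 n, if i ≤ k ∧ z k = 0 then n else 0) := by
    rw [fcount_classData_neg n i z hz,
      if_neg (by simp only [Finset.mem_Icc]; omega), add_zero]
    refine Finset.sum_congr rfl fun k hk => ?_
    obtain ⟨hk1, hk2⟩ := Finset.mem_Icc.mp hk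
    refine if_congr ?_ rfl rfl
    simp only [Finset.mem_Icc]
    omega
  have e4 : fcount (classData n i z) 1 (Finset.Icc (2 * i) (2 * n + 1)) =
      (∑ k ∈ Finset.Icc 1 n, if i ≤ k ∧ z k = 1 then n else 0) + 4 * n ^ 2 := by
    rw [fcount_classData_pos n i z hz,
      if_pos (Finset.mem_Icc.mpr ⟨by omega, by omega⟩)]
    congr 1
    refine Finset.sum_congr rfl fun k hk => ?_
    obtain ⟨hk1, hk2⟩ := Finset.mem_Icc.mp hk
    refine if_congr ?_ rfl rfl
    simp only [Finset.mem_Icc]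
    omega
  have e5 : fcount (classData n i z) (-1) (Finset.Icc 1 (2 * i)) =
      (∑ k ∈ Finset.Icc 1 n, if k ≤ i ∧ z k = 0 then n else 0) + 4 * n ^ 2 := by
    rw [fcount_classData_neg n i z hz,
      if_pos (Finset.mem_Icc.mpr ⟨by omega, by omega⟩)]
    congr 1
    refine Finset.sum_congr rfl fun k hk => ?_
    obtain ⟨hk1, hk2⟩ := Finset.mem_Icc.mp hk
    refine if_congr ?_ rfl rfl
    simp only [Finset.mem_Icc]
    omega
  have e6 : fcount (classData n i z) 1 (Finset.Icc 1 (2 * i)) =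
      (∑ k ∈ Finset.Icc 1 n, if k ≤ i ∧ z k = 1 then n else 0) := by
    rw [fcount_classData_pos n i z hz,
      if_neg (by simp only [Finset.mem_Icc]; omega), add_zero]
    refine Finset.sum_congr rfl fun k hk => ?_
    obtain ⟨hk1, hk2⟩ := Finset.mem_Icc.mp hk
    refine if_congr ?_ rfl rfl
    simp only [Finset.mem_Icc]
    omega
  have e7 : fcount (classData n i z) (-1) (Finset.Icc (2 * i + 1) (2 * n + 1)) =
      (∑ k ∈ Finset.Icc 1 n, if i < k ∧ z k = 0 then n else 0) := by
    rw [fcount_classData_neg n i z hz,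
      if_neg (by simp only [Finset.mem_Icc]; omega), add_zero]
    refine Finset.sum_congr rfl fun k hk => ?_
    obtain ⟨hk1, hk2⟩ := Finset.mem_Icc.mp hk
    refine if_congr ?_ rfl rfl
    simp only [Finset.mem_Icc]
    omega
  have e8 : fcount (classData n i z) 1 (Finset.Icc (2 * i + 1) (2 * n + 1)) =
      (∑ k ∈ Finset.Icc 1 n, if i < k ∧ z k = 1 then n else 0) + 4 * n ^ 2 := by
    rw [fcount_classData_pos n i z hz,
      if_pos (Finset.mem_Icc.mpr ⟨by omega, by omega⟩)]
    congr 1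
    refine Finset.sum_congr rfl fun k hk => ?_
    obtain ⟨hk1, hk2⟩ := Finset.mem_Icc.mp hk
    refine if_congr ?_ rfl rfl
    simp only [Finset.mem_Icc]
    omega
  have hboundIf : ∀ (P : ℕ → Prop) (inst : DecidablePred P),
      (∑ k ∈ Finset.Icc 1 n, @ite ℕ (P k) (inst k) n 0) ≤ 4 * n ^ 2 :=
    fun P inst => hble _ fun k => by split_ifs <;> omega
  -- Lmis evaluations
  have hL1 : Lmis (2 * n + 1) (classData n i z) (2 * i - 1) =
      (1 / (9 * (n : ℝ) ^ 2)) *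
        (((∑ k ∈ Finset.Icc 1 n, if k < i ∧ z k = 1 then n else 0 : ℕ) : ℝ)
        + ((∑ k ∈ Finset.Icc 1 n, if i ≤ k ∧ z k = 0 then n else 0 : ℕ) : ℝ)) := by
    unfold Lmis
    have h2 : 2 * i - 1 + 1 = 2 * i := by omega
    rw [h2, hcard', e1, e2, e3, e4]
    have m1 : min ((∑ k ∈ Finset.Icc 1 n, if k < i ∧ z k = 0 then n else 0) + 4 * n ^ 2)
        (∑ k ∈ Finset.Icc 1 n, if k < i ∧ z k = 1 then n else 0)
        = ∑ k ∈ Finset.Icc 1 n, if k < i ∧ z k = 1 then n else 0 :=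
      min_eq_right (le_trans (hboundIf _ _) (Nat.le_add_left _ _))
    have m2 : min (∑ k ∈ Finset.Icc 1 n, if i ≤ k ∧ z k = 0 then n else 0)
        ((∑ k ∈ Finset.Icc 1 n, if i ≤ k ∧ z k = 1 then n else 0) + 4 * n ^ 2)
        = ∑ k ∈ Finset.Icc 1 n, if i ≤ k ∧ z k = 0 then n else 0 :=
      min_eq_left (le_trans (hboundIf _ _) (Nat.le_add_left _ _))
    rw [m1, m2]
  have hL2 : Lmis (2 * n + 1) (classData n i z) (2 * i) =
      (1 / (9 * (n : ℝ) ^ 2)) *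
        (((∑ k ∈ Finset.Icc 1 n, if k ≤ i ∧ z k = 1 then n else 0 : ℕ) : ℝ)
        + ((∑ k ∈ Finset.Icc 1 n, if i < k ∧ z k = 0 then n else 0 : ℕ) : ℝ)) := by
    unfold Lmis
    rw [hcard', e5, e6, e7, e8]
    have m1 : min ((∑ k ∈ Finset.Icc 1 n, if k ≤ i ∧ z k = 0 then n else 0) + 4 * n ^ 2)
        (∑ k ∈ Finset.Icc 1 n, if k ≤ i ∧ z k = 1 then n else 0)
        = ∑ k ∈ Finset.Icc 1 n, if k ≤ i ∧ z k = 1 then n else 0 :=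
      min_eq_right (le_trans (hboundIf _ _) (Nat.le_add_left _ _))
    have m2 : min (∑ k ∈ Finset.Icc 1 n, if i < k ∧ z k = 0 then n else 0)
        ((∑ k ∈ Finset.Icc 1 n, if i < k ∧ z k = 1 then n else 0) + 4 * n ^ 2)
        = ∑ k ∈ Finset.Icc 1 n, if i < k ∧ z k = 0 then n else 0 :=
      min_eq_left (le_trans (hboundIf _ _) (Nat.le_add_left _ _))
    rw [m1, m2]
  -- splitting the sums at k = i
  have hs1 : (∑ k ∈ Finset.Icc 1 n, if k ≤ i ∧ z k = 1 then n else 0) =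
      (∑ k ∈ Finset.Icc 1 n, if k < i ∧ z k = 1 then n else 0)
        + (if z i = 1 then n else 0) := by
    have h : ∀ k ∈ Finset.Icc 1 n, (if k ≤ i ∧ z k = 1 then n else 0)
        = (if k < i ∧ z k = 1 then n else 0)
          + (if k = i then (if z i = 1 then n else 0) else 0) := by
      intro k hk
      rcases eq_or_ne k i with rfl | hne
      · simp
      · rw [if_neg hne, add_zero]
        refine if_congr ?_ rfl rfl
        omega
    rw [Finset.sum_congr rfl h, Finset.sum_add_distrib,
      Finset.sum_ite_eq' (Finset.Icc 1 n) i, if_pos hi]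
  have hs0 : (∑ k ∈ Finset.Icc 1 n, if i ≤ k ∧ z k = 0 then n else 0) =
      (∑ k ∈ Finset.Icc 1 n, if i < k ∧ z k = 0 then n else 0)
        + (if z i = 0 then n else 0) := by
    have h : ∀ k ∈ Finset.Icc 1 n, (if i ≤ k ∧ z k = 0 then n else 0)
        = (if i < k ∧ z k = 0 then n else 0)
          + (if k = i then (if z i = 0 then n else 0) else 0) := by
      intro k hk
      rcases eq_or_ne k i with rfl | hne
      · simp
      · rw [if_neg hne, add_zero]
        refine if_congr ?_ rfl rfl
        omega
    rw [Finset.sum_congr rfl h, Finset.sum_add_distrib,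
      Finset.sum_ite_eq' (Finset.Icc 1 n) i, if_pos hi]
  have hfrac : (n : ℝ) / (Multiset.card (classData n i z) : ℝ) = 1 / (9 * (n : ℝ)) := by
    rw [hcard']
    field_simp
  rcases hz i with h0 | h1
  · -- z i = 0 : split 2i is better
    have hB1 : (∑ k ∈ Finset.Icc 1 n, if k ≤ i ∧ z k = 1 then n else 0) =
        (∑ k ∈ Finset.Icc 1 n, if k < i ∧ z k = 1 then n else 0) := by
      rw [hs1, if_neg (by omega), add_zero]
    have hA0 : (∑ k ∈ Finset.Icc 1 n, if i ≤ k ∧ z k = 0 then n else 0) =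
        (∑ k ∈ Finset.Icc 1 n, if i < k ∧ z k = 0 then n else 0) + n := by
      rw [hs0, if_pos h0]
    have hdiff : Lmis (2 * n + 1) (classData n i z) (2 * i - 1)
        - Lmis (2 * n + 1) (classData n i z) (2 * i)
        = (n : ℝ) / (Multiset.card (classData n i z) : ℝ) := by
      rw [hL1, hL2, hA0, hB1, hcard']
      push_cast
      ring
    refine ⟨?_, hfrac, fun h => absurd h (by omega), fun _ => by linarith [hdiff]⟩
    rw [hdiff, abs_of_nonneg (by positivity)]
  · -- z i = 1 : split 2i - 1 is better
    have hB1 : (∑ k ∈ Finset.Icc 1 n, if k ≤ i ∧ z k = 1 then n else 0) =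
        (∑ k ∈ Finset.Icc 1 n, if k < i ∧ z k = 1 then n else 0) + n := by
      rw [hs1, if_pos h1]
    have hA0 : (∑ k ∈ Finset.Icc 1 n, if i ≤ k ∧ z k = 0 then n else 0) =
        (∑ k ∈ Finset.Icc 1 n, if i < k ∧ z k = 0 then n else 0) := by
      rw [hs0, if_neg (by omega), add_zero]
    have hdiff : Lmis (2 * n + 1) (classData n i z) (2 * i)
        - Lmis (2 * n + 1) (classData n i z) (2 * i - 1)
        = (n : ℝ) / (Multiset.card (classData n i z) : ℝ) := by
      rw [hL1, hL2, hA0, hB1, hcard']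
      push_cast
      ring
    refine ⟨?_, hfrac, fun _ => by linarith [hdiff], fun h => absurd h (by omega)⟩
    rw [abs_sub_comm, hdiff, abs_of_nonneg (by positivity)]
end
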